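/- Let p be a prime, k a perfect field of characteristic p, W(k) its ring of p-typical Witt vectors, and F : W(k) → W(k) the Witt vector Frobenius. Define φ on the power series ring W(k)[[z]] by φ(Σ_n b_n z^n) = Σ_n F(b_n) z^{pn}. Then for every unit λ ∈ W(k)[[z]] whose constant coefficient is 1, there exists a unique power series b ∈ W(k)[[z]] with constant coefficient 1 such that φ(b) = λ·b. -/

import Mathlib

/-- The map `φ` on `W(k)[[z]]` acting as the Witt vector Frobenius on coefficients and
sending `z` to `z^p`: the coefficient of `z^m` in `φ b` is `F (b_{m/p})` if `p ∣ m` and `0`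
otherwise. -/
noncomputable def wittSeriesFrobenius (p : ℕ) [hp : Fact p.Prime] (k : Type*) [CommRing k]
    [CharP k p] (b : PowerSeries (WittVector p k)) : PowerSeries (WittVector p k) :=
  PowerSeries.mk fun m =>
    if p ∣ m then WittVector.frobenius (PowerSeries.coeff (m / p) b) else 0

noncomputable def wittSeq (p : ℕ) [hp : Fact p.Prime] (k : Type*) [CommRing k]
    [CharP k p] (lam : PowerSeries (WittVector p k)) : ℕ → WittVector p k
  | 0 => 1
  | (m+1) =>
      (if p ∣ (m+1) then WittVector.frobenius (wittSeq p k lam ((m+1)/p)) else 0)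
        - ∑ i ∈ Finset.range (m+1),
            PowerSeries.coeff (i+1) lam * wittSeq p k lam (m+1 - (i+1))
  termination_by m => m
  decreasing_by
  · exact Nat.div_lt_self (Nat.succ_pos m) hp.out.one_lt
  · omega

lemma coeff_mul_split {R : Type*} [CommRing R] (lam b : PowerSeries R) (m : ℕ) :
    PowerSeries.coeff m (lam * b) =
      PowerSeries.constantCoeff lam * PowerSeries.coeff m b +
      ∑ i ∈ Finset.range m,
        PowerSeries.coeff (i+1) lam * PowerSeries.coeff (m - (i+1)) b := by
  rw [PowerSeries.coeff_mul, Finset.Nat.sum_antidiagonal_eq_sum_range_succ_mk,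
    Finset.sum_range_succ']
  simp [add_comm, PowerSeries.coeff_zero_eq_constantCoeff]

/-- For every unit `λ` of `W(k)[[z]]` with constant coefficient `1` there is a unique
power series `b` with constant coefficient `1` such that `φ(b) = λ * b`. -/
theorem statement2 (p : ℕ) [hp : Fact p.Prime] (k : Type*) [Field k] [CharP k p]
    [PerfectRing k p] (lam : PowerSeries (WittVector p k))
    (hunit : IsUnit lam) (hconst : PowerSeries.constantCoeff lam = 1) :
    ∃! b : PowerSeries (WittVector p k),
      PowerSeries.constantCoeff b = 1 ∧
      wittSeriesFrobenius p k b = lam * b := by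
  set c := wittSeq p k lam with hc
  -- key: any solution has coefficients c
  have key : ∀ b : PowerSeries (WittVector p k),
      (PowerSeries.constantCoeff b = 1 ∧ wittSeriesFrobenius p k b = lam * b) →
      ∀ m, PowerSeries.coeff m b = c m := by
    rintro b ⟨hb1, hb2⟩ m
    induction m using Nat.strong_induction_on with
    | _ m ih =>
      match m with
      | 0 => simpa [hc, wittSeq, PowerSeries.coeff_zero_eq_constantCoeff] using hb1
      | (m+1) =>
        have h := congrArg (PowerSeries.coeff (m+1)) hb2
        rw [coeff_mul_split, hconst, one_mul] at h
        have hL : PowerSeries.coeff (m+1) (wittSeriesFrobenius p k b)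
            = (if p ∣ (m+1) then WittVector.frobenius (c ((m+1)/p)) else 0) := by
          simp only [wittSeriesFrobenius, PowerSeries.coeff_mk]
          split_ifs with hdvd
          · rw [ih ((m+1)/p) (Nat.div_lt_self (Nat.succ_pos m) hp.out.one_lt)]
          · rfl
        have hS : ∑ i ∈ Finset.range (m+1),
            PowerSeries.coeff (i+1) lam *
              PowerSeries.coeff (m+1 - (i+1)) b
            = ∑ i ∈ Finset.range (m+1),
            PowerSeries.coeff (i+1) lam * c (m+1 - (i+1)) := by
          refine Finset.sum_congr rfl fun i hi => ?_
          rw [ih (m+1-(i+1)) (by omega)]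
        rw [hL, hS] at h
        rw [hc]
        show _ = wittSeq p k lam (m+1)
        rw [wittSeq, ← hc]
        linear_combination -h
  -- the candidate
  refine ⟨PowerSeries.mk c, ⟨?_, ?_⟩, fun b hb => ?_⟩
  · simp [hc, wittSeq, ← PowerSeries.coeff_zero_eq_constantCoeff]
  · ext m
    rw [coeff_mul_split, hconst, one_mul]
    simp only [wittSeriesFrobenius, PowerSeries.coeff_mk]
    match m with
    | 0 =>
      simp [hc, wittSeq, Nat.dvd_zero]
    | (m+1) =>
      conv_rhs => rw [hc, wittSeq]
      rw [← hc]
      congr 1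
      abel
  · ext m
    rw [key b hb m, PowerSeries.coeff_mk]
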